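/- For every k ≥ 2 and n ≥ 0, the number of k-noncrossing RNA structures on [n] satisfies S_k(n) = Σ_{b=0}^{⌊n/2⌋} (−1)^b · C(n−b, b) · f_k^*(n−2b), where C denotes the binomial coefficient. -/

import Mathlib

/-- The empty shape (Ferrers diagram with no squares). -/
def emptyShape : ℕ → ℕ := fun _ => 0

/-- `f : ℕ → ℕ` represents a shape (integer partition / Ferrers diagram), recording the
number of squares in each row (0-indexed): rows are weakly decreasing and eventually zero. -/
def IsShape (f : ℕ → ℕ) : Prop := (∀ i, f (i + 1) ≤ f i) ∧ ∃ N, f N = 0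

/-- The shape `f` has at most `r` (nonzero) rows. -/
def RowsLE (r : ℕ) (f : ℕ → ℕ) : Prop := f r = 0

/-- `mu` is obtained from `lam` by adding one square in row `j` (0-indexed). -/
def AddSquareAt (j : ℕ) (lam mu : ℕ → ℕ) : Prop :=
  mu j = lam j + 1 ∧ ∀ i, i ≠ j → mu i = lam i

/-- `mu` is obtained from `lam` by adding one square. -/
def AddSquare (lam mu : ℕ → ℕ) : Prop := ∃ j, AddSquareAt j lam mu

/-- `mu` and `lam` differ by exactly one square (added or removed). -/
def OscStep (lam mu : ℕ → ℕ) : Prop := AddSquare lam mu ∨ AddSquare mu lam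

/-- `mu` is obtained from `lam` by adding one square, removing one square, or doing nothing. -/
def StarStep (lam mu : ℕ → ℕ) : Prop := mu = lam ∨ OscStep lam mu

/-- `t` encodes a `*`-tableaux of shape `lam` and length `m`, all of whose shapes have at
most `k - 1` rows: `t 0 = ∅`, `t m = lam`, consecutive shapes differ by at most one square,
and the sequence is padded by `lam` from index `m` on (so that `t` is determined by its
values `t 0, …, t m`). -/
def IsStarTab (k : ℕ) (lam : ℕ → ℕ) (m : ℕ) (t : ℕ → ℕ → ℕ) : Prop :=
  t 0 = emptyShape ∧ (∀ i, m ≤ i → t i = lam) ∧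
  (∀ i, i < m → StarStep (t i) (t (i + 1))) ∧
  ∀ i, IsShape (t i) ∧ RowsLE (k - 1) (t i)

/-- `t` encodes an oscillating tableaux: a `*`-tableaux whose consecutive shapes differ. -/
def IsOscTab (k : ℕ) (lam : ℕ → ℕ) (m : ℕ) (t : ℕ → ℕ → ℕ) : Prop :=
  IsStarTab k lam m t ∧ ∀ i, i < m → t (i + 1) ≠ t i

/-- `O_k^*(lam, m)`: the number of `*`-tableaux of shape `lam` and length `m`, all of whose
shapes have at most `k - 1` rows. -/
noncomputable def Ostar (k : ℕ) (lam : ℕ → ℕ) (m : ℕ) : ℕ :=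
  Nat.card {t : ℕ → ℕ → ℕ // IsStarTab k lam m t}

/-- `O_k^0(lam, m)`: the number of oscillating tableaux of shape `lam` and length `m`, all of
whose shapes have at most `k - 1` rows. -/
noncomputable def Oosc (k : ℕ) (lam : ℕ → ℕ) (m : ℕ) : ℕ :=
  Nat.card {t : ℕ → ℕ → ℕ // IsOscTab k lam m t}

/-- A `(+□₁, −□₁)`-pair at position `i` of a tableaux of length `m`: a square is added in the
first row and immediately removed again. -/
def PairAt (m : ℕ) (t : ℕ → ℕ → ℕ) (i : ℕ) : Prop :=
  i + 2 ≤ m ∧ AddSquareAt 0 (t i) (t (i + 1)) ∧ t (i + 2) = t i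

/-- `Q_k^*(lam, m, j)`: the number of `*`-tableaux of shape `lam` and length `m` with at most
`k - 1` rows containing exactly `j` `(+□₁, −□₁)`-pairs. -/
noncomputable def Qstar (k : ℕ) (lam : ℕ → ℕ) (m j : ℕ) : ℕ :=
  Nat.card {t : ℕ → ℕ → ℕ //
    IsStarTab k lam m t ∧ Nat.card {i : ℕ // PairAt m t i} = j}

/-- `W_k^*(lam, m)`: the number of `*`-tableaux of shape `lam` and length `m` with at most
`k - 1` rows containing no `(+□₁, −□₁)`-pair. -/
noncomputable def Wstar (k : ℕ) (lam : ℕ → ℕ) (m : ℕ) : ℕ :=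
  Nat.card {t : ℕ → ℕ → ℕ // IsStarTab k lam m t ∧ ∀ i, ¬ PairAt m t i}

/-- `M` is a partial matching on `[n] = {1, …, n}`: a set of arcs `(i, j)` with
`1 ≤ i < j ≤ n` such that every vertex lies in at most one arc. -/
def IsPartialMatching (n : ℕ) (M : Finset (ℕ × ℕ)) : Prop :=
  (∀ p ∈ M, 1 ≤ p.1 ∧ p.1 < p.2 ∧ p.2 ≤ n) ∧
  ∀ p ∈ M, ∀ q ∈ M, p ≠ q → p.1 ≠ q.1 ∧ p.1 ≠ q.2 ∧ p.2 ≠ q.1 ∧ p.2 ≠ q.2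

/-- `M` contains a `k`-crossing: arcs `(i₁,j₁), …, (i_k,j_k)` with
`i₁ < ⋯ < i_k < j₁ < ⋯ < j_k`. -/
def HasKCrossing (k : ℕ) (M : Finset (ℕ × ℕ)) : Prop :=
  ∃ a : Fin k → ℕ × ℕ, (∀ i, a i ∈ M) ∧
    (∀ i j, i < j → (a i).1 < (a j).1) ∧
    (∀ i j, i < j → (a i).2 < (a j).2) ∧
    ∀ i j, (a i).1 < (a j).2

/-- `M` is a `k`-noncrossing partial matching on `[n]`. -/
def KNoncrossingPM (k n : ℕ) (M : Finset (ℕ × ℕ)) : Prop :=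
  IsPartialMatching n M ∧ ¬ HasKCrossing k M

/-- `f_k^*(n)`: the number of `k`-noncrossing partial matchings on `[n]`. -/
noncomputable def fstar (k n : ℕ) : ℕ :=
  Nat.card {M : Finset (ℕ × ℕ) // KNoncrossingPM k n M}

/-- `M` is a matching on `[n]`: a partial matching in which every vertex lies in an arc. -/
def IsMatching (n : ℕ) (M : Finset (ℕ × ℕ)) : Prop :=
  IsPartialMatching n M ∧ ∀ v, 1 ≤ v → v ≤ n → ∃ p ∈ M, p.1 = v ∨ p.2 = v

/-- `f_k(n)`: the number of `k`-noncrossing matchings on `[n]`. -/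
noncomputable def fmatch (k n : ℕ) : ℕ :=
  Nat.card {M : Finset (ℕ × ℕ) // IsMatching n M ∧ ¬ HasKCrossing k M}

/-- `M` is a `k`-noncrossing RNA structure on `[n]`: a `k`-noncrossing partial matching
without `1`-arcs `(i, i+1)`. -/
def IsRNA (k n : ℕ) (M : Finset (ℕ × ℕ)) : Prop :=
  KNoncrossingPM k n M ∧ ∀ i, (i, i + 1) ∉ M

/-- `S_k(n)`: the number of `k`-noncrossing RNA structures on `[n]`. -/
noncomputable def Snum (k n : ℕ) : ℕ :=
  Nat.card {M : Finset (ℕ × ℕ) // IsRNA k n M}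

/-- `F(n, h)`: the number of `±1`-sequences of length `n` with all partial sums nonnegative
and total sum `h` (lattice paths from `(0,0)` to `(n,h)` staying in the first quadrant). -/
noncomputable def Fpath (n h : ℕ) : ℕ :=
  Nat.card {s : Fin n → ℤ // (∀ i, s i = 1 ∨ s i = -1) ∧
    (∀ m : ℕ, 0 ≤ ∑ i ∈ Finset.univ.filter (fun i : Fin n => (i : ℕ) < m), s i) ∧
    (∑ i, s i) = (h : ℤ)}

/-- The two-row shape `(x₁, x₂)`. -/
def twoRowShape (x1 x2 : ℕ) : ℕ → ℕ :=
  fun i => if i = 0 then x1 else if i = 1 then x2 else 0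

/-- Add one square to row `h` (0-indexed) of `f`. -/
def addRow (h : ℕ) (f : ℕ → ℕ) : ℕ → ℕ := fun i => if i = h then f i + 1 else f i

/-- Remove one square from row `h` (0-indexed) of `f`. -/
def subRow (h : ℕ) (f : ℕ → ℕ) : ℕ → ℕ := fun i => if i = h then f i - 1 else f i

/-- `V_k^*(ν, m) = W_k^*(ν, m) − W_k^*(ν⁻, m−1)`, where `ν⁻` is `ν` with one square removed
from the first row, and the second term is `0` if `ν` has an empty first row (invalid `ν⁻`). -/
noncomputable def Vstar (k : ℕ) (nu : ℕ → ℕ) (m : ℕ) : ℤ :=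
  (Wstar k nu m : ℤ) - if 0 < nu 0 then (Wstar k (subRow 0 nu) (m - 1) : ℤ) else 0

/-- The hyperbolic Bessel function of the first kind of order `r` evaluated at `2x`, as a
formal power series: `I_r(2x) = Σ_{j ≥ max(0,−r)} x^{2j+r}/(j!·(r+j)!)`. -/
noncomputable def besselI (r : ℤ) : PowerSeries ℚ :=
  PowerSeries.mk fun n =>
    if r.natAbs ≤ n ∧ (n : ℤ) % 2 = r % 2 then
      (1 : ℚ) / (((((n : ℤ) - r) / 2).toNat.factorial * ((((n : ℤ) + r) / 2).toNat.factorial) : ℕ) : ℚ)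
    else 0

namespace SnumAlt
open Finset

open scoped Classical

lemma pm_eq_of_shared {n : ℕ} {M : Finset (ℕ × ℕ)} (h : IsPartialMatching n M)
    {p q : ℕ × ℕ} (hp : p ∈ M) (hq : q ∈ M)
    (hv : p.1 = q.1 ∨ p.1 = q.2 ∨ p.2 = q.1 ∨ p.2 = q.2) : p = q := by
  by_contra hne
  obtain ⟨h1, h2, h3, h4⟩ := h.2 p hp q hq hne
  tauto

def Uni (n : ℕ) : Finset (Finset (ℕ × ℕ)) := ((Finset.Icc 1 n) ×ˢ (Finset.Icc 1 n)).powerset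

lemma mem_Uni {n : ℕ} {M : Finset (ℕ × ℕ)} (h : IsPartialMatching n M) : M ∈ Uni n := by
  simp only [Uni, mem_powerset]
  intro p hp
  obtain ⟨h1, h2, h3⟩ := h.1 p hp
  simp only [mem_product, mem_Icc]
  omega

lemma natCard_eq {n : ℕ} (P : Finset (ℕ × ℕ) → Prop)
    (h : ∀ M, P M → IsPartialMatching n M) :
    Nat.card {M : Finset (ℕ × ℕ) // P M} = ((Uni n).filter P).card := by
  rw [← Nat.card_eq_finsetCard]
  exact Nat.card_congr (Equiv.subtypeEquivRight (fun M => by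
    simp only [mem_filter]
    exact ⟨fun hP => ⟨mem_Uni (h M hP), hP⟩, fun hh => hh.2⟩))

/-- generic pushforward of a k-crossing along a map strictly monotone on a set
containing all endpoints -/
lemma hasKCrossing_map {k : ℕ} {M M' : Finset (ℕ × ℕ)} (f : ℕ → ℕ)
    (S : Finset ℕ) (hS : ∀ p ∈ M, p.1 ∈ S ∧ p.2 ∈ S)
    (hmono : ∀ a ∈ S, ∀ b ∈ S, a < b → f a < f b)
    (hmem : ∀ p ∈ M, (f p.1, f p.2) ∈ M')
    (h : HasKCrossing k M) : HasKCrossing k M' := by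
  obtain ⟨a, ha, h1, h2, h3⟩ := h
  refine ⟨fun i => (f (a i).1, f (a i).2), fun i => hmem _ (ha i), ?_, ?_, ?_⟩
  · intro i j hij
    exact hmono _ (hS _ (ha i)).1 _ (hS _ (ha j)).1 (h1 i j hij)
  · intro i j hij
    exact hmono _ (hS _ (ha i)).2 _ (hS _ (ha j)).2 (h2 i j hij)
  · intro i j
    exact hmono _ (hS _ (ha i)).1 _ (hS _ (ha j)).2 (h3 i j)

def GoodB (n : ℕ) (B : Finset ℕ) : Prop := B ⊆ Finset.Icc 1 (n - 1) ∧ ∀ i ∈ B, i + 1 ∉ B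

def Contains (B : Finset ℕ) (M : Finset (ℕ × ℕ)) : Prop := ∀ i ∈ B, (i, i + 1) ∈ M

def barcs (B : Finset ℕ) : Finset (ℕ × ℕ) := B.image fun i => (i, i + 1)

def Vset (B : Finset ℕ) : Finset ℕ := B.biUnion fun i => ({i, i + 1} : Finset ℕ)

def Sset (n : ℕ) (B : Finset ℕ) : Finset ℕ := Finset.Icc 1 n \ Vset B

lemma mem_barcs {B : Finset ℕ} {p : ℕ × ℕ} : p ∈ barcs B ↔ ∃ i ∈ B, p = (i, i + 1) := by
  simp [barcs, eq_comm]

lemma Vset_card {n : ℕ} {B : Finset ℕ} (hB : GoodB n B) : (Vset B).card = 2 * B.card := by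
  rw [Vset, card_biUnion]
  · simp [card_insert_of_notMem, mul_comm]
  · intro i hi j hj hij
    have h1 : i + 1 ≠ j := fun h => hB.2 i hi (h ▸ hj)
    have h2 : j + 1 ≠ i := fun h => hB.2 j hj (h ▸ hi)
    simp only [disjoint_insert_left, disjoint_insert_right, mem_insert, mem_singleton,
      disjoint_singleton, disjoint_singleton_left]
    push_neg
    omega

lemma Vset_subset {n : ℕ} {B : Finset ℕ} (hB : GoodB n B) : Vset B ⊆ Finset.Icc 1 n := by
  intro v hv
  simp only [Vset, mem_biUnion, mem_insert, mem_singleton] at hv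
  obtain ⟨i, hi, hv⟩ := hv
  have := hB.1 hi
  simp only [mem_Icc] at this ⊢
  omega

lemma Sset_card {n : ℕ} {B : Finset ℕ} (hB : GoodB n B) :
    (Sset n B).card = n - 2 * B.card := by
  rw [Sset, card_sdiff_of_subset (Vset_subset hB), Vset_card hB, Nat.card_Icc]
  omega

lemma two_mul_card_le {n : ℕ} {B : Finset ℕ} (hB : GoodB n B) : 2 * B.card ≤ n := by
  have := Finset.card_le_card (Vset_subset hB)
  rwa [Vset_card hB, Nat.card_Icc, Nat.add_sub_cancel] at this


def pm2 (f : ℕ → ℕ) (p : ℕ × ℕ) : ℕ × ℕ := (f p.1, f p.2)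

lemma endpoints_in_S {n : ℕ} {B : Finset ℕ} {M : Finset (ℕ × ℕ)}
    (hM : IsPartialMatching n M) (hC : Contains B M)
    {p : ℕ × ℕ} (hp : p ∈ M) (hnb : p ∉ barcs B) : p.1 ∈ Sset n B ∧ p.2 ∈ Sset n B := by
  obtain ⟨hb1, hb2, hb3⟩ := hM.1 p hp
  have key : ∀ v, (v = p.1 ∨ v = p.2) → v ∉ Vset B := by
    intro v hv hvV
    simp only [Vset, mem_biUnion, mem_insert, mem_singleton] at hvV
    obtain ⟨i, hi, hvi⟩ := hvV
    have hq : (i, i + 1) ∈ M := hC i hi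
    have : p = (i, i + 1) := by
      apply pm_eq_of_shared hM hp hq
      simp only []
      omega
    exact hnb (mem_barcs.2 ⟨i, hi, this⟩)
  constructor
  · simp only [Sset, mem_sdiff, mem_Icc]
    exact ⟨⟨hb1, by omega⟩, key p.1 (Or.inl rfl)⟩
  · simp only [Sset, mem_sdiff, mem_Icc]
    exact ⟨⟨by omega, hb3⟩, key p.2 (Or.inr rfl)⟩

lemma barcs_subset {B : Finset ℕ} {M : Finset (ℕ × ℕ)} (hC : Contains B M) :
    barcs B ⊆ M := by
  intro p hp
  obtain ⟨i, hi, rfl⟩ := mem_barcs.1 hp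
  exact hC i hi

section Contraction

variable {k n : ℕ} {B : Finset ℕ} (hk : 2 ≤ k) (hB : GoodB n B)
variable (φ ψ : ℕ → ℕ)
variable (hφT : ∀ v ∈ Sset n B, φ v ∈ Finset.Icc 1 (n - 2 * B.card))
variable (hψS : ∀ w ∈ Finset.Icc 1 (n - 2 * B.card), ψ w ∈ Sset n B)
variable (hφmono : ∀ v ∈ Sset n B, ∀ w ∈ Sset n B, v < w → φ v < φ w)
variable (hψmono : ∀ v ∈ Finset.Icc 1 (n - 2 * B.card), ∀ w ∈ Finset.Icc 1 (n - 2 * B.card),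
    v < w → ψ v < ψ w)
variable (hψφ : ∀ v ∈ Sset n B, ψ (φ v) = v)
variable (hφψ : ∀ w ∈ Finset.Icc 1 (n - 2 * B.card), φ (ψ w) = w)

set_option maxHeartbeats 1000000 in
include hk hB hφT hψS hφmono hψmono hψφ hφψ in
lemma contraction_card :
    ((Uni n).filter (fun M => KNoncrossingPM k n M ∧ Contains B M)).card
      = ((Uni (n - 2 * B.card)).filter (fun M => KNoncrossingPM k (n - 2 * B.card) M)).card := by
  set m := n - 2 * B.card with hm
  apply Finset.card_bij' (fun M _ => (M \ barcs B).image (pm2 φ))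
    (fun M' _ => barcs B ∪ M'.image (pm2 ψ))
  -- first: forward map lands in target
  · intro M hM
    simp only [mem_filter] at hM
    obtain ⟨hMU, ⟨hPM, hNC⟩, hC⟩ := hM
    have hpts : ∀ p ∈ M \ barcs B, p.1 ∈ Sset n B ∧ p.2 ∈ Sset n B := by
      intro p hp
      rw [mem_sdiff] at hp
      exact endpoints_in_S hPM hC hp.1 hp.2
    have hinj : ∀ p ∈ M \ barcs B, ∀ q ∈ M \ barcs B, pm2 φ p = pm2 φ q → p = q := by
      intro p hp q hq hpq
      have h1 := (hpts p hp).1; have h2 := (hpts p hp).2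
      have h3 := (hpts q hq).1; have h4 := (hpts q hq).2
      have e1 : φ p.1 = φ q.1 := congrArg Prod.fst hpq
      have e2 : φ p.2 = φ q.2 := congrArg Prod.snd hpq
      have : p.1 = q.1 := by rw [← hψφ p.1 h1, ← hψφ q.1 h3, e1]
      have : p.2 = q.2 := by rw [← hψφ p.2 h2, ← hψφ q.2 h4, e2]
      ext <;> assumption
    have hPM' : IsPartialMatching m ((M \ barcs B).image (pm2 φ)) := by
      constructor
      · intro p' hp'
        obtain ⟨p, hp, rfl⟩ := mem_image.1 hp'
        have h1 := hφT p.1 (hpts p hp).1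
        have h2 := hφT p.2 (hpts p hp).2
        simp only [mem_Icc] at h1 h2
        have hlt : φ p.1 < φ p.2 := by
          apply hφmono _ (hpts p hp).1 _ (hpts p hp).2
          exact (hPM.1 p (mem_sdiff.1 hp).1).2.1
        exact ⟨h1.1, hlt, h2.2⟩
      · intro p' hp' q' hq' hne
        obtain ⟨p, hp, rfl⟩ := mem_image.1 hp'
        obtain ⟨q, hq, rfl⟩ := mem_image.1 hq'
        have hpq : p ≠ q := fun h => hne (by rw [h])
        obtain ⟨d1, d2, d3, d4⟩ := hPM.2 p (mem_sdiff.1 hp).1 q (mem_sdiff.1 hq).1 hpq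
        have h1 := (hpts p hp).1; have h2 := (hpts p hp).2
        have h3 := (hpts q hq).1; have h4 := (hpts q hq).2
        have φinj : ∀ x ∈ Sset n B, ∀ y ∈ Sset n B, φ x = φ y → x = y := by
          intro x hx y hy hxy
          rw [← hψφ x hx, ← hψφ y hy, hxy]
        exact ⟨fun he => d1 (φinj _ h1 _ h3 (by simpa [pm2] using he)),
          fun he => d2 (φinj _ h1 _ h4 (by simpa [pm2] using he)),
          fun he => d3 (φinj _ h2 _ h3 (by simpa [pm2] using he)),
          fun he => d4 (φinj _ h2 _ h4 (by simpa [pm2] using he))⟩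
    have hNC' : ¬ HasKCrossing k ((M \ barcs B).image (pm2 φ)) := by
      intro hx
      apply hNC
      apply hasKCrossing_map ψ (Finset.Icc 1 m) _ hψmono _ hx
      · intro p' hp'
        obtain ⟨p, hp, rfl⟩ := mem_image.1 hp'
        exact ⟨hφT p.1 (hpts p hp).1, hφT p.2 (hpts p hp).2⟩
      · intro p' hp'
        obtain ⟨p, hp, rfl⟩ := mem_image.1 hp'
        have : (ψ (φ p.1), ψ (φ p.2)) = p := by
          rw [hψφ p.1 (hpts p hp).1, hψφ p.2 (hpts p hp).2]
        simp only [pm2] at this ⊢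
        rw [this]
        exact (mem_sdiff.1 hp).1
    exact mem_filter.2 ⟨mem_Uni hPM', hPM', hNC'⟩
  -- second: backward map lands in source
  · intro M' hM'
    simp only [mem_filter] at hM'
    obtain ⟨hMU, hPM', hNC'⟩ := hM'
    have hpts' : ∀ p ∈ M', p.1 ∈ Finset.Icc 1 m ∧ p.2 ∈ Finset.Icc 1 m := by
      intro p hp
      obtain ⟨a1, a2, a3⟩ := hPM'.1 p hp
      simp only [mem_Icc]
      omega
    have hSV : ∀ v ∈ Sset n B, v ∉ Vset B := by
      intro v hv
      exact (mem_sdiff.1 hv).2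
    have hBmem : ∀ i ∈ B, 1 ≤ i ∧ i + 1 ≤ n := by
      intro i hi
      have := hB.1 hi
      simp only [mem_Icc] at this
      omega
    have hψarc_pts : ∀ p ∈ M'.image (pm2 ψ), p.1 ∈ Sset n B ∧ p.2 ∈ Sset n B := by
      intro p hp
      obtain ⟨q, hq, rfl⟩ := mem_image.1 hp
      exact ⟨hψS q.1 (hpts' q hq).1, hψS q.2 (hpts' q hq).2⟩
    have hψ_not_barc : ∀ p ∈ M'.image (pm2 ψ), p ∉ barcs B := by
      intro p hp hpb
      obtain ⟨i, hi, rfl⟩ := mem_barcs.1 hpb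
      have := (hψarc_pts _ hp).1
      apply hSV _ this
      simp only [Vset, mem_biUnion, mem_insert, mem_singleton]
      exact ⟨i, hi, Or.inl rfl⟩
    have hPMn : IsPartialMatching n (barcs B ∪ M'.image (pm2 ψ)) := by
      constructor
      · intro p hp
        rcases mem_union.1 hp with hp | hp
        · obtain ⟨i, hi, rfl⟩ := mem_barcs.1 hp
          have := hBmem i hi
          omega
        · obtain ⟨q, hq, rfl⟩ := mem_image.1 hp
          have h1 := hψS q.1 (hpts' q hq).1
          have h2 := hψS q.2 (hpts' q hq).2
          simp only [Sset, mem_sdiff, mem_Icc] at h1 h2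
          have hlt : ψ q.1 < ψ q.2 :=
            hψmono _ (hpts' q hq).1 _ (hpts' q hq).2 (hPM'.1 q hq).2.1
          exact ⟨h1.1.1, hlt, h2.1.2⟩
      · intro p hp q hq hne
        rcases mem_union.1 hp with hp1 | hp1 <;> rcases mem_union.1 hq with hq1 | hq1
        · obtain ⟨i, hi, rfl⟩ := mem_barcs.1 hp1
          obtain ⟨j, hj, rfl⟩ := mem_barcs.1 hq1
          have hij : i ≠ j := fun h => hne (by rw [h])
          have h1 : i + 1 ≠ j := fun h => hB.2 i hi (h ▸ hj)
          have h2 : j + 1 ≠ i := fun h => hB.2 j hj (h ▸ hi)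
          simp only []
          omega
        · obtain ⟨i, hi, rfl⟩ := mem_barcs.1 hp1
          have hq2 := hψarc_pts q hq1
          have hv : ∀ v ∈ Sset n B, v ≠ i ∧ v ≠ i + 1 := by
            intro v hv
            have := hSV v hv
            simp only [Vset, mem_biUnion, mem_insert, mem_singleton] at this
            push_neg at this
            have := this i hi
            tauto
          have a1 := hv q.1 hq2.1
          have a2 := hv q.2 hq2.2
          simp only []
          exact ⟨(a1.1 ∘ Eq.symm), (a2.1 ∘ Eq.symm), (a1.2 ∘ Eq.symm), (a2.2 ∘ Eq.symm)⟩
        · obtain ⟨j, hj, rfl⟩ := mem_barcs.1 hq1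
          have hp2 := hψarc_pts p hp1
          have hv : ∀ v ∈ Sset n B, v ≠ j ∧ v ≠ j + 1 := by
            intro v hv
            have := hSV v hv
            simp only [Vset, mem_biUnion, mem_insert, mem_singleton] at this
            push_neg at this
            have := this j hj
            tauto
          have a1 := hv p.1 hp2.1
          have a2 := hv p.2 hp2.2
          exact ⟨a1.1, a1.2, a2.1, a2.2⟩
        · obtain ⟨p0, hp0, rfl⟩ := mem_image.1 hp1
          obtain ⟨q0, hq0, rfl⟩ := mem_image.1 hq1
          have hpq : p0 ≠ q0 := fun h => hne (by rw [h])
          obtain ⟨d1, d2, d3, d4⟩ := hPM'.2 p0 hp0 q0 hq0 hpq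
          have h1 := (hpts' p0 hp0).1; have h2 := (hpts' p0 hp0).2
          have h3 := (hpts' q0 hq0).1; have h4 := (hpts' q0 hq0).2
          have ψinj : ∀ x ∈ Finset.Icc 1 m, ∀ y ∈ Finset.Icc 1 m, ψ x = ψ y → x = y := by
            intro x hx y hy hxy
            rw [← hφψ x hx, ← hφψ y hy, hxy]
          exact ⟨fun he => d1 (ψinj _ h1 _ h3 (by simpa [pm2] using he)),
            fun he => d2 (ψinj _ h1 _ h4 (by simpa [pm2] using he)),
            fun he => d3 (ψinj _ h2 _ h3 (by simpa [pm2] using he)),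
            fun he => d4 (ψinj _ h2 _ h4 (by simpa [pm2] using he))⟩
    have hCont : Contains B (barcs B ∪ M'.image (pm2 ψ)) := by
      intro i hi
      exact mem_union.2 (Or.inl (mem_barcs.2 ⟨i, hi, rfl⟩))
    have hNCn : ¬ HasKCrossing k (barcs B ∪ M'.image (pm2 ψ)) := by
      rintro ⟨a, ha, c1, c2, c3⟩
      have hnb : ∀ t, a t ∉ barcs B := by
        intro t htb
        obtain ⟨i, hi, hti⟩ := mem_barcs.1 htb
        have ht1 : (a t).1 = i := by rw [hti]
        have ht2 : (a t).2 = i + 1 := by rw [hti]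
        have h2k : (1 : ℕ) < k := by omega
        set s : Fin k := if t = ⟨0, by omega⟩ then ⟨1, by omega⟩ else ⟨0, by omega⟩ with hs
        have hst : s ≠ t := by
          rcases eq_or_ne t ⟨0, by omega⟩ with h | h
          · rw [hs, if_pos h, h]
            intro hc
            exact absurd (congrArg Fin.val hc) (by simp)
          · rw [hs, if_neg h]
            exact fun hc => h hc.symm
        rcases lt_or_gt_of_ne hst with hlt | hlt
        · -- s < t : (a s).2 < (a t).2 = i+1 and i = (a t).1 < (a s).2
          have e1 := c2 s t hlt
          have e2 := c3 t s
          omega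
        · -- t < s : (a t).1 < (a s).1 and (a s).1 < (a t).2 = i + 1
          have e1 := c1 t s hlt
          have e2 := c3 s t
          omega
      have hmem' : ∀ t, a t ∈ M'.image (pm2 ψ) := by
        intro t
        rcases mem_union.1 (ha t) with h | h
        · exact absurd h (hnb t)
        · exact h
      apply hNC'
      apply hasKCrossing_map φ (Sset n B) hψarc_pts hφmono _ ⟨a, hmem', c1, c2, c3⟩
      intro p hp
      obtain ⟨q, hq, rfl⟩ := mem_image.1 hp
      have : (φ (ψ q.1), φ (ψ q.2)) = q := by
        rw [hφψ q.1 (hpts' q hq).1, hφψ q.2 (hpts' q hq).2]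
      simp only [pm2] at this ⊢
      rw [this]
      exact hq
    exact mem_filter.2 ⟨mem_Uni hPMn, ⟨hPMn, hNCn⟩, hCont⟩
  -- third: left inverse
  · intro M hM
    simp only [mem_filter] at hM
    obtain ⟨hMU, ⟨hPM, hNC⟩, hC⟩ := hM
    have hpts : ∀ p ∈ M \ barcs B, p.1 ∈ Sset n B ∧ p.2 ∈ Sset n B := by
      intro p hp
      rw [mem_sdiff] at hp
      exact endpoints_in_S hPM hC hp.1 hp.2
    rw [Finset.image_image]
    have : (M \ barcs B).image (pm2 ψ ∘ pm2 φ) = M \ barcs B := by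
      rw [Finset.image_congr (g := id), Finset.image_id]
      intro p hp
      have h1 := (hpts p hp).1; have h2 := (hpts p hp).2
      simp only [Function.comp_apply, pm2, id_eq]
      rw [hψφ p.1 h1, hψφ p.2 h2]
    rw [this, Finset.union_sdiff_of_subset (barcs_subset hC)]
  -- fourth: right inverse
  · intro M' hM'
    simp only [mem_filter] at hM'
    obtain ⟨hMU, hPM', hNC'⟩ := hM'
    have hpts' : ∀ p ∈ M', p.1 ∈ Finset.Icc 1 m ∧ p.2 ∈ Finset.Icc 1 m := by
      intro p hp
      obtain ⟨a1, a2, a3⟩ := hPM'.1 p hp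
      simp only [mem_Icc]
      omega
    have hdisj : Disjoint (barcs B) (M'.image (pm2 ψ)) := by
      rw [Finset.disjoint_left]
      intro p hpb hpi
      obtain ⟨q, hq, rfl⟩ := mem_image.1 hpi
      obtain ⟨i, hi, hqi⟩ := mem_barcs.1 hpb
      have hS1 : ψ q.1 ∈ Sset n B := hψS q.1 (hpts' q hq).1
      have : ψ q.1 ∉ Vset B := (mem_sdiff.1 hS1).2
      apply this
      simp only [Vset, mem_biUnion, mem_insert, mem_singleton]
      refine ⟨i, hi, Or.inl ?_⟩
      have : (pm2 ψ q).1 = i := by rw [hqi]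
      exact this
    rw [Finset.union_sdiff_cancel_left hdisj, Finset.image_image]
    rw [Finset.image_congr (g := id), Finset.image_id]
    intro p hp
    simp only [Function.comp_apply, pm2, id_eq]
    rw [hφψ p.1 (hpts' p hp).1, hφψ p.2 (hpts' p hp).2]

end Contraction

lemma good_filter_card {k n : ℕ} {B : Finset ℕ} (hk : 2 ≤ k) (hB : GoodB n B) :
    ((Uni n).filter (fun M => KNoncrossingPM k n M ∧ Contains B M)).card
      = fstar k (n - 2 * B.card) := by
  have hfs : fstar k (n - 2 * B.card)
      = ((Uni (n - 2 * B.card)).filter (fun M => KNoncrossingPM k (n - 2 * B.card) M)).card :=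
    natCard_eq _ (fun M hM => hM.1)
  rw [hfs]
  set m := n - 2 * B.card with hm
  have hS : (Sset n B).card = m := Sset_card hB
  have hT : (Finset.Icc 1 m).card = m := by rw [Nat.card_Icc]; omega
  set e1 := (Sset n B).orderIsoOfFin hS with he1
  set e2 := (Finset.Icc 1 m).orderIsoOfFin hT with he2
  set φ : ℕ → ℕ := fun v => if h : v ∈ Sset n B then (e2 (e1.symm ⟨v, h⟩) : ℕ) else 0 with hφ
  set ψ : ℕ → ℕ :=
    fun w => if h : w ∈ Finset.Icc 1 m then (e1 (e2.symm ⟨w, h⟩) : ℕ) else 0 with hψ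
  have hφS : ∀ v (h : v ∈ Sset n B), φ v = (e2 (e1.symm ⟨v, h⟩) : ℕ) := fun v h => dif_pos h
  have hψT : ∀ w (h : w ∈ Finset.Icc 1 m), ψ w = (e1 (e2.symm ⟨w, h⟩) : ℕ) :=
    fun w h => dif_pos h
  have hφT : ∀ v ∈ Sset n B, φ v ∈ Finset.Icc 1 m := fun v h => by
    rw [hφS v h]; exact (e2 _).2
  have hψSp : ∀ w ∈ Finset.Icc 1 m, ψ w ∈ Sset n B := fun w h => by
    rw [hψT w h]; exact (e1 _).2
  have hφmono : ∀ v ∈ Sset n B, ∀ w ∈ Sset n B, v < w → φ v < φ w := by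
    intro v hv w hw hvw
    rw [hφS v hv, hφS w hw]
    have h1 : e1.symm ⟨v, hv⟩ < e1.symm ⟨w, hw⟩ := e1.symm.lt_iff_lt.2 (Subtype.mk_lt_mk.2 hvw)
    exact Subtype.coe_lt_coe.2 (e2.lt_iff_lt.2 h1)
  have hψmono : ∀ v ∈ Finset.Icc 1 m, ∀ w ∈ Finset.Icc 1 m, v < w → ψ v < ψ w := by
    intro v hv w hw hvw
    rw [hψT v hv, hψT w hw]
    have h1 : e2.symm ⟨v, hv⟩ < e2.symm ⟨w, hw⟩ := e2.symm.lt_iff_lt.2 (Subtype.mk_lt_mk.2 hvw)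
    exact Subtype.coe_lt_coe.2 (e1.lt_iff_lt.2 h1)
  have hψφ : ∀ v ∈ Sset n B, ψ (φ v) = v := by
    intro v hv
    rw [hψT (φ v) (hφT v hv)]
    have h1 : (⟨φ v, hφT v hv⟩ : {x // x ∈ Finset.Icc 1 m}) = e2 (e1.symm ⟨v, hv⟩) :=
      Subtype.ext (hφS v hv)
    rw [h1, e2.symm_apply_apply, e1.apply_symm_apply]
  have hφψ : ∀ w ∈ Finset.Icc 1 m, φ (ψ w) = w := by
    intro w hw
    rw [hφS (ψ w) (hψSp w hw)]
    have h1 : (⟨ψ w, hψSp w hw⟩ : {x // x ∈ Sset n B}) = e1 (e2.symm ⟨w, hw⟩) :=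
      Subtype.ext (hψT w hw)
    rw [h1, e1.symm_apply_apply, e2.apply_symm_apply]
  exact contraction_card hk hB φ ψ hφT hψSp hφmono hψmono hψφ hφψ


section GoodCount

open scoped Classical

/-- chain inequality from consecutive gaps of 2 -/
lemma chain_le {b : ℕ} (β : Fin b → ℕ)
    (hgap : ∀ (j : ℕ) (h1 : j < b) (h2 : j + 1 < b), β ⟨j, h1⟩ + 2 ≤ β ⟨j + 1, h2⟩) :
    ∀ (d j : ℕ) (h1 : j < b) (h2 : j + d < b), β ⟨j, h1⟩ + 2 * d ≤ β ⟨j + d, h2⟩ := by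
  intro d
  induction d with
  | zero => intro j h1 h2; simp
  | succ d ih =>
    intro j h1 h2
    have hd : j + d < b := by omega
    have hd1 : j + d + 1 < b := by omega
    have i1 := ih j h1 hd
    have i2 := hgap (j + d) hd hd1
    have hidx : (⟨j + d + 1, hd1⟩ : Fin b) = ⟨j + (d + 1), h2⟩ := Fin.mk_eq_mk.2 (by omega)
    rw [hidx] at i2
    omega

noncomputable def shr (b : ℕ) (B : Finset ℕ) : Finset ℕ :=
  if h : B.card = b then Finset.univ.image (fun t : Fin b => B.orderEmbOfFin h t - t.val) else ∅

noncomputable def grw (b : ℕ) (C : Finset ℕ) : Finset ℕ :=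
  if h : C.card = b then Finset.univ.image (fun t : Fin b => C.orderEmbOfFin h t + t.val) else ∅

lemma image_univ_card {b : ℕ} (f : Fin b → ℕ) (hf : StrictMono f) :
    (Finset.univ.image f).card = b := by
  rw [Finset.card_image_of_injective _ hf.injective, Finset.card_univ, Fintype.card_fin]

lemma orderEmb_of_image {b : ℕ} (f : Fin b → ℕ) (hf : StrictMono f)
    (h : (Finset.univ.image f).card = b) :
    ⇑((Finset.univ.image f).orderEmbOfFin h) = f :=
  (Finset.orderEmbOfFin_unique h (fun x => mem_image_of_mem f (mem_univ x)) hf).symm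

lemma image_orderEmbOfFin {b : ℕ} (B : Finset ℕ) (h : B.card = b) :
    Finset.univ.image ⇑(B.orderEmbOfFin h) = B := by
  apply Finset.eq_of_subset_of_card_le
  · intro x hx
    obtain ⟨t, _, rfl⟩ := mem_image.1 hx
    exact Finset.orderEmbOfFin_mem B h t
  · rw [image_univ_card _ (B.orderEmbOfFin h).strictMono, h]

section GoodFacts

variable {n b : ℕ} {B : Finset ℕ} (hB : GoodB n B) (h : B.card = b)

include hB h in
lemma good_bounds : ∀ t : Fin b, 1 ≤ B.orderEmbOfFin h t ∧ B.orderEmbOfFin h t ≤ n - 1 := by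
  intro t
  have := hB.1 (Finset.orderEmbOfFin_mem B h t)
  simpa [mem_Icc] using this

include hB h in
lemma good_gap : ∀ (j : ℕ) (h1 : j < b) (h2 : j + 1 < b),
    B.orderEmbOfFin h ⟨j, h1⟩ + 2 ≤ B.orderEmbOfFin h ⟨j + 1, h2⟩ := by
  intro j h1 h2
  set β := B.orderEmbOfFin h
  have hlt : β ⟨j, h1⟩ < β ⟨j + 1, h2⟩ := β.strictMono (by exact Fin.mk_lt_mk.2 (by omega))
  by_contra hc
  have heq : β ⟨j + 1, h2⟩ = β ⟨j, h1⟩ + 1 := by omega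
  have hm1 : β ⟨j, h1⟩ ∈ B := Finset.orderEmbOfFin_mem B h _
  have hm2 : β ⟨j, h1⟩ + 1 ∈ B := heq ▸ Finset.orderEmbOfFin_mem B h _
  exact hB.2 _ hm1 hm2

include hB h in
lemma good_chain : ∀ (j s : ℕ) (h1 : j < b) (h2 : s < b), j ≤ s →
    B.orderEmbOfFin h ⟨j, h1⟩ + 2 * (s - j) ≤ B.orderEmbOfFin h ⟨s, h2⟩ := by
  intro j s h1 h2 hjs
  have h3 : j + (s - j) < b := by omega
  have hc := chain_le (B.orderEmbOfFin h) (good_gap hB h) (s - j) j h1 h3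
  have hidx : (⟨j + (s - j), h3⟩ : Fin b) = ⟨s, h2⟩ := Fin.mk_eq_mk.2 (by omega)
  rw [hidx] at hc
  exact hc

include hB h in
lemma good_lb : ∀ t : Fin b, 2 * t.val + 1 ≤ B.orderEmbOfFin h t := by
  intro t
  have h0 : (0 : ℕ) < b := t.pos
  have hc := good_chain hB h 0 t.val h0 t.2 (by omega)
  rw [Fin.eta t t.2] at hc
  have hb := (good_bounds hB h ⟨0, h0⟩).1
  omega

include hB h in
lemma good_ub : ∀ t : Fin b, B.orderEmbOfFin h t + 2 * (b - 1 - t.val) ≤ n - 1 := by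
  intro t
  have h0 : (0 : ℕ) < b := t.pos
  have h1 : b - 1 < b := by omega
  have hc := good_chain hB h t.val (b - 1) t.2 h1 (by omega)
  rw [Fin.eta t t.2] at hc
  have hb := (good_bounds hB h ⟨b - 1, h1⟩).2
  omega

include hB h in
lemma shr_mono : StrictMono (fun t : Fin b => B.orderEmbOfFin h t - t.val) := by
  intro t s hts
  have hv : t.val < s.val := hts
  have hc := good_chain hB h t.val s.val t.2 s.2 (by omega)
  rw [Fin.eta t t.2, Fin.eta s s.2] at hc
  have hl := good_lb hB h t
  simp only
  omega

include hB h in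
lemma shr_eq : shr b B = Finset.univ.image (fun t : Fin b => B.orderEmbOfFin h t - t.val) :=
  dif_pos h

include hB h in
lemma shr_card : (shr b B).card = b := by
  rw [shr_eq hB h]
  exact image_univ_card _ (shr_mono hB h)

include hB h in
lemma shr_subset : shr b B ⊆ Finset.Icc 1 (n - b) := by
  rw [shr_eq hB h]
  intro x hx
  obtain ⟨t, _, rfl⟩ := mem_image.1 hx
  have h1 := good_lb hB h t
  have h2 := good_ub hB h t
  have h3 := t.2
  simp only [mem_Icc]
  omega

end GoodFacts

section GrowFacts

variable {n b : ℕ} {C : Finset ℕ} (hC : C ⊆ Finset.Icc 1 (n - b)) (h : C.card = b)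

include hC h in
lemma grw_bounds : ∀ t : Fin b, 1 ≤ C.orderEmbOfFin h t ∧ C.orderEmbOfFin h t ≤ n - b := by
  intro t
  have := hC (Finset.orderEmbOfFin_mem C h t)
  simpa [mem_Icc] using this

lemma grw_mono (h : C.card = b) : StrictMono (fun t : Fin b => C.orderEmbOfFin h t + t.val) := by
  intro t s hts
  have := (C.orderEmbOfFin h).strictMono hts
  have hv : t.val < s.val := hts
  simp only
  omega

include hC h in
lemma grw_eq : grw b C = Finset.univ.image (fun t : Fin b => C.orderEmbOfFin h t + t.val) :=
  dif_pos h

include hC h in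
lemma grw_card : (grw b C).card = b := by
  rw [grw_eq hC h]
  exact image_univ_card _ (grw_mono h)

include hC h in
lemma grw_good : GoodB n (grw b C) := by
  rw [grw_eq hC h]
  constructor
  · intro x hx
    obtain ⟨t, _, rfl⟩ := mem_image.1 hx
    have h1 := grw_bounds hC h t
    have h2 := t.2
    simp only [mem_Icc]
    omega
  · intro x hx hx1
    obtain ⟨t, _, ht⟩ := mem_image.1 hx
    obtain ⟨s, _, hs⟩ := mem_image.1 hx1
    rcases lt_trichotomy t s with hts | hts | hts
    · have h1 := (C.orderEmbOfFin h).strictMono hts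
      have h2 : t.val < s.val := hts
      omega
    · rw [hts] at ht
      omega
    · have h1 := (C.orderEmbOfFin h).strictMono hts
      have h2 : s.val < t.val := hts
      omega

end GrowFacts

lemma grw_shr {n b : ℕ} {B : Finset ℕ} (hB : GoodB n B) (h : B.card = b) :
    grw b (shr b B) = B := by
  have hsc : (shr b B).card = b := shr_card hB h
  have hsub : shr b B ⊆ Finset.Icc 1 (n - b) := shr_subset hB h
  rw [grw_eq hsub hsc]
  have hemb : ⇑((shr b B).orderEmbOfFin hsc)
      = fun t : Fin b => B.orderEmbOfFin h t - t.val :=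
    (Finset.orderEmbOfFin_unique hsc
      (fun x => by rw [shr_eq hB h]; exact mem_image_of_mem _ (mem_univ x))
      (shr_mono hB h)).symm
  simp only [hemb]
  have : (fun t : Fin b => (B.orderEmbOfFin h t - t.val) + t.val)
      = fun t : Fin b => B.orderEmbOfFin h t := by
    funext t
    have := good_lb hB h t
    omega
  rw [this]
  exact image_orderEmbOfFin B h

lemma shr_grw {n b : ℕ} {C : Finset ℕ} (hC : C ⊆ Finset.Icc 1 (n - b)) (h : C.card = b) :
    shr b (grw b C) = C := by
  have hgc : (grw b C).card = b := grw_card hC h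
  have hgood : GoodB n (grw b C) := grw_good hC h
  rw [shr_eq hgood hgc]
  have hemb : ⇑((grw b C).orderEmbOfFin hgc)
      = fun t : Fin b => C.orderEmbOfFin h t + t.val :=
    (Finset.orderEmbOfFin_unique hgc
      (fun x => by rw [grw_eq hC h]; exact mem_image_of_mem _ (mem_univ x))
      (grw_mono h)).symm
  simp only [hemb]
  have : (fun t : Fin b => (C.orderEmbOfFin h t + t.val) - t.val)
      = fun t : Fin b => C.orderEmbOfFin h t := by
    funext t
    omega
  rw [this]
  exact image_orderEmbOfFin C h

lemma good_count (n b : ℕ) :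
    (((Finset.Icc 1 n).powerset).filter (fun B => GoodB n B ∧ B.card = b)).card
      = (n - b).choose b := by
  have htgt : ((Finset.Icc 1 (n - b)).powersetCard b).card = (n - b).choose b := by
    rw [Finset.card_powersetCard, Nat.card_Icc, Nat.add_sub_cancel]
  rw [← htgt]
  apply Finset.card_nbij' (shr b) (grw b)
  · intro B hB
    simp only [coe_filter, Set.mem_setOf_eq] at hB
    obtain ⟨_, hgood, hcard⟩ := hB
    exact Finset.mem_powersetCard.2 ⟨shr_subset hgood hcard, shr_card hgood hcard⟩
  · intro C hC
    obtain ⟨hsub, hcard⟩ := Finset.mem_powersetCard.1 hC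
    refine mem_filter.2 ⟨Finset.mem_powerset.2 ?_, grw_good hsub hcard, grw_card hsub hcard⟩
    intro x hx
    have := (grw_good hsub hcard).1 hx
    simp only [mem_Icc] at this ⊢
    omega
  · intro B hB
    simp only [coe_filter, Set.mem_setOf_eq] at hB
    exact grw_shr hB.2.1 hB.2.2
  · intro C hC
    obtain ⟨hsub, hcard⟩ := Finset.mem_powersetCard.1 hC
    exact shr_grw hsub hcard

end GoodCount

lemma bad_filter_card {k n : ℕ} {B : Finset ℕ} (hBsub : B ⊆ Finset.Icc 1 n)
    (hbad : ¬ GoodB n B) :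
    ((Uni n).filter (fun M => KNoncrossingPM k n M ∧ Contains B M)).card = 0 := by
  rw [Finset.card_eq_zero, Finset.filter_eq_empty_iff]
  rintro M hMU ⟨⟨hPM, _⟩, hC⟩
  by_cases hsub : B ⊆ Finset.Icc 1 (n - 1)
  · have hnotsp : ¬ ∀ i ∈ B, i + 1 ∉ B := fun hs => hbad ⟨hsub, hs⟩
    push_neg at hnotsp
    obtain ⟨i, hi, hi1⟩ := hnotsp
    have h1 : (i, i + 1) ∈ M := hC i hi
    have h2 : (i + 1, i + 2) ∈ M := hC (i + 1) hi1
    have hne : ((i, i + 1) : ℕ × ℕ) ≠ (i + 1, i + 2) := by simp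
    have := (hPM.2 _ h1 _ h2 hne).2.2.1
    simp at this
  · rw [Finset.not_subset] at hsub
    obtain ⟨i, hi, hnot⟩ := hsub
    have hin := hBsub hi
    simp only [mem_Icc] at hin hnot
    have h1 : (i, i + 1) ∈ M := hC i hi
    have := (hPM.1 _ h1).2.2
    simp only at this
    omega

theorem Snum_eq_alt_sum' (k n : ℕ) (hk : 2 ≤ k) :
    (Snum k n : ℤ) = ∑ b ∈ Finset.range (n / 2 + 1),
      (-1 : ℤ) ^ b * ((n - b).choose b : ℤ) * (fstar k (n - 2 * b) : ℤ) := by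
  classical
  have hSnum : Snum k n = ((Uni n).filter (fun M => IsRNA k n M)).card :=
    natCard_eq _ (fun M hM => hM.1.1)
  set A := (Uni n).filter (fun M => KNoncrossingPM k n M) with hA
  set ones : Finset (ℕ × ℕ) → Finset ℕ :=
    fun M => (Finset.Icc 1 n).filter (fun i => (i, i + 1) ∈ M) with hones
  have hfilterRNA : (Uni n).filter (fun M => IsRNA k n M)
      = A.filter (fun M => ones M = ∅) := by
    rw [hA, Finset.filter_filter]
    apply Finset.filter_congr
    intro M hMU
    simp only [IsRNA]
    constructor
    · rintro ⟨hKNC, hno⟩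
      refine ⟨hKNC, ?_⟩
      rw [Finset.filter_eq_empty_iff]
      intro i _
      exact hno i
    · rintro ⟨hKNC, hemp⟩
      refine ⟨hKNC, fun i hiM => ?_⟩
      have hb := hKNC.1.1 _ hiM
      simp only at hb
      have hiI : i ∈ Finset.Icc 1 n := by simp only [mem_Icc]; omega
      have : i ∈ ones M := mem_filter.2 ⟨hiI, hiM⟩
      rw [hemp] at this
      exact absurd this (Finset.notMem_empty i)
  -- step 1 : indicator sum
  have step1 : ((Snum k n : ℤ)) = ∑ M ∈ A, (if ones M = ∅ then (1 : ℤ) else 0) := by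
    rw [hSnum, hfilterRNA, Finset.sum_boole]
  -- step 2 : inclusion-exclusion inner expansion
  have step2 : ∀ M ∈ A, (if ones M = ∅ then (1 : ℤ) else 0)
      = ∑ Bs ∈ (Finset.Icc 1 n).powerset,
          (if Bs ⊆ ones M then (-1 : ℤ) ^ Bs.card else 0) := by
    intro M _
    rw [← Finset.sum_powerset_neg_one_pow_card]
    calc ∑ Bs ∈ (ones M).powerset, (-1 : ℤ) ^ Bs.card
        = ∑ Bs ∈ (ones M).powerset, (if Bs ⊆ ones M then (-1 : ℤ) ^ Bs.card else 0) :=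
          Finset.sum_congr rfl (fun Bs hBs => (if_pos (Finset.mem_powerset.1 hBs)).symm)
      _ = ∑ Bs ∈ (Finset.Icc 1 n).powerset, (if Bs ⊆ ones M then (-1 : ℤ) ^ Bs.card else 0) :=
          Finset.sum_subset (Finset.powerset_mono.2 (Finset.filter_subset _ _))
            (fun Bs _ hBs => if_neg (fun hc => hBs (Finset.mem_powerset.2 hc)))
  -- step 3 : swap order of summation
  have step3 : ((Snum k n : ℤ)) = ∑ Bs ∈ (Finset.Icc 1 n).powerset,
      (-1 : ℤ) ^ Bs.card * ((A.filter (fun M => Contains Bs M)).card : ℤ) := by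
    rw [step1, Finset.sum_congr rfl step2, Finset.sum_comm]
    apply Finset.sum_congr rfl
    intro Bs hBs
    have hsubeq : A.filter (fun M => Bs ⊆ ones M) = A.filter (fun M => Contains Bs M) := by
      apply Finset.filter_congr
      intro M hM
      simp only [hA, mem_filter] at hM
      constructor
      · intro hsub i hiB
        exact (mem_filter.1 (hsub hiB)).2
      · intro hcont i hiB
        have hb := hM.2.1.1 _ (hcont i hiB)
        simp only at hb
        exact mem_filter.2 ⟨by simp only [mem_Icc]; omega, hcont i hiB⟩
    rw [← hsubeq]
    have : ∀ M ∈ A, (if Bs ⊆ ones M then (-1 : ℤ) ^ Bs.card else 0)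
        = (-1 : ℤ) ^ Bs.card * (if Bs ⊆ ones M then (1 : ℤ) else 0) := by
      intro M _
      by_cases hc : Bs ⊆ ones M <;> simp [hc]
    rw [Finset.sum_congr rfl this, ← Finset.mul_sum, Finset.sum_boole]
  -- step 4 : evaluate the inner counts
  have step4 : ((Snum k n : ℤ)) = ∑ Bs ∈ (Finset.Icc 1 n).powerset,
      (if GoodB n Bs then (-1 : ℤ) ^ Bs.card * (fstar k (n - 2 * Bs.card) : ℤ) else 0) := by
    rw [step3]
    apply Finset.sum_congr rfl
    intro Bs hBs
    have hAf : A.filter (fun M => Contains Bs M)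
        = (Uni n).filter (fun M => KNoncrossingPM k n M ∧ Contains Bs M) := by
      rw [hA, Finset.filter_filter]
    by_cases hg : GoodB n Bs
    · rw [if_pos hg, hAf, good_filter_card hk hg]
    · rw [if_neg hg, hAf, bad_filter_card (Finset.mem_powerset.1 hBs) hg]
      simp
  -- step 5 : group by cardinality
  have step5 : ((Snum k n : ℤ)) = ∑ b ∈ Finset.range (n + 1),
      (-1 : ℤ) ^ b * ((n - b).choose b : ℤ) * (fstar k (n - 2 * b) : ℤ) := by
    rw [step4]
    rw [← Finset.sum_fiberwise_of_maps_to (g := Finset.card)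
      (t := Finset.range (n + 1)) (fun Bs hBs => by
        have := Finset.card_le_card (Finset.mem_powerset.1 hBs)
        rw [Nat.card_Icc] at this
        simp only [Finset.mem_range]
        omega)]
    apply Finset.sum_congr rfl
    intro b _
    have hcongr : ∀ Bs ∈ ((Finset.Icc 1 n).powerset).filter (fun Bs => Bs.card = b),
        (if GoodB n Bs then (-1 : ℤ) ^ Bs.card * (fstar k (n - 2 * Bs.card) : ℤ) else 0)
        = (if GoodB n Bs then (-1 : ℤ) ^ b * (fstar k (n - 2 * b) : ℤ) else 0) := by
      intro Bs hBs
      rw [(mem_filter.1 hBs).2]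
    rw [Finset.sum_congr rfl hcongr]
    have : ∀ Bs ∈ ((Finset.Icc 1 n).powerset).filter (fun Bs => Bs.card = b),
        (if GoodB n Bs then (-1 : ℤ) ^ b * (fstar k (n - 2 * b) : ℤ) else 0)
        = ((-1 : ℤ) ^ b * (fstar k (n - 2 * b) : ℤ)) * (if GoodB n Bs then (1 : ℤ) else 0) := by
      intro Bs _
      by_cases hg : GoodB n Bs <;> simp [hg]
    rw [Finset.sum_congr rfl this, ← Finset.mul_sum, Finset.sum_boole]
    rw [Finset.filter_filter]
    have hff : ((Finset.Icc 1 n).powerset).filter (fun Bs => Bs.card = b ∧ GoodB n Bs)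
        = ((Finset.Icc 1 n).powerset).filter (fun Bs => GoodB n Bs ∧ Bs.card = b) := by
      apply Finset.filter_congr
      intro Bs _
      exact and_comm
    rw [hff, good_count]
    ring
  -- step 6 : restrict the range
  rw [step5]
  rw [← Finset.sum_subset (Finset.range_subset_range.2 (by omega : n / 2 + 1 ≤ n + 1))]
  intro b hb hnb
  simp only [Finset.mem_range] at hb hnb
  have : n - b < b := by omega
  rw [Nat.choose_eq_zero_of_lt this]
  simp

end SnumAlt


/-- `S_k(n) = Σ_{b=0}^{⌊n/2⌋} (−1)^b · C(n−b, b) · f_k^*(n−2b)`. -/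
theorem Snum_eq_alt_sum (k n : ℕ) (hk : 2 ≤ k) :
    (Snum k n : ℤ) = ∑ b ∈ Finset.range (n / 2 + 1),
      (-1 : ℤ) ^ b * ((n - b).choose b : ℤ) * (fstar k (n - 2 * b) : ℤ) := by
  exact SnumAlt.Snum_eq_alt_sum' k n hk
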